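/- Let {φ_n(x)}_{n≥0} be a binomial sequence of polynomials. Then for all integers m ≥ r ≥ 1, B_{m,r}(1, 2φ₁(1), 3φ₂(1), 4φ₃(1), …) = C(m, r) · φ_{m-r}(r), where the k-th argument of the Bell polynomial is k·φ_{k-1}(1). -/

import Mathlib

/-- Index set for the partial Bell polynomial `B_{m,r}`: sequences
`(r₁, …, r_m)` of nonnegative integers with `r₁+⋯+r_m = r` and
`r₁+2r₂+⋯+m·r_m = m`. -/
def bellIndex (m r : ℕ) : Finset (Fin m → ℕ) :=
  (Fintype.piFinset fun _ => Finset.range (m+1)).filter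
    fun c => (∑ i, c i) = r ∧ (∑ i, (i.1+1) * c i) = m

/-- The partial Bell polynomial `B_{m,r}(x₁,x₂,…)`, where `x i` is the `i`-th variable:
`B_{m,r} = ∑ m!/(r₁!⋯r_m!) ∏ (x_i/i!)^{r_i}`. -/
def partialBell (x : ℕ → ℚ) (m r : ℕ) : ℚ :=
  ∑ c ∈ bellIndex m r,
    ((m.factorial : ℚ) / ∏ i, ((c i).factorial : ℚ)) *
      ∏ i, (x (i.1+1) / ((i.1+1).factorial : ℚ)) ^ c i


/-- product of monomials -/
lemma prod_monomial_aux (s : Finset ℕ) (e : ℕ → ℕ) (b : ℕ → ℚ) :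
    ∏ i ∈ s, Polynomial.monomial (e i) (b i)
      = Polynomial.monomial (∑ i ∈ s, e i) (∏ i ∈ s, b i) := by
  induction s using Finset.cons_induction with
  | empty => simp [Polynomial.monomial_zero_one]
  | cons a s ha ih => rw [Finset.prod_cons, Finset.prod_cons, Finset.sum_cons, ih, Polynomial.monomial_mul_monomial]

/-- the generating polynomial -/
noncomputable def gp (φ : ℕ → Polynomial ℚ) (m : ℕ) : Polynomial ℚ :=
  ∑ i ∈ Finset.range m, Polynomial.monomial (i+1) ((φ i).eval 1 / (i.factorial : ℚ))

lemma gp_coeff (φ : ℕ → Polynomial ℚ) (m p : ℕ) (hp : p ≤ m) :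
    (gp φ m).coeff p = if p = 0 then 0 else (φ (p-1)).eval 1 / ((p-1).factorial : ℚ) := by
  rw [gp, Polynomial.finset_sum_coeff]
  simp only [Polynomial.coeff_monomial]
  rcases Nat.eq_zero_or_pos p with h | h
  · subst h; simp
  · obtain ⟨q, rfl⟩ := Nat.exists_eq_add_of_lt h
    simp only [Nat.add_eq, Nat.succ_ne_zero, if_neg (Nat.succ_ne_zero q)]
    rw [Finset.sum_eq_single q]
    · simp
    · intro i _ hi; simp [Nat.add_comm, hi]
    · intro hq; exact absurd (Finset.mem_range.2 (by omega)) hq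

lemma gp_pow_coeff (φ : ℕ → Polynomial ℚ)
    (hbin : ∀ (n : ℕ) (x y : ℚ), (φ n).eval (x + y)
      = ∑ i ∈ Finset.range (n+1), (n.choose i : ℚ) * (φ i).eval x * (φ (n-i)).eval y)
    (m : ℕ) :
    ∀ r, 1 ≤ r → ∀ n, n ≤ m →
      ((gp φ m) ^ r).coeff n
        = if r ≤ n then (φ (n-r)).eval (r : ℚ) / ((n-r).factorial : ℚ) else 0 := by
  intro r hr
  induction r, hr using Nat.le_induction with
  | base =>
    intro n hn
    rw [pow_one, gp_coeff φ m n hn]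
    rcases Nat.eq_zero_or_pos n with h | h
    · subst h; simp
    · rw [if_neg (show ¬ n = 0 by omega), if_pos (show 1 ≤ n by omega)]
      norm_num
  | succ r hr ih =>
    intro n hn
    rw [pow_succ', Polynomial.coeff_mul, Finset.Nat.sum_antidiagonal_eq_sum_range_succ_mk]
    by_cases h : r + 1 ≤ n
    · rw [if_pos h]
      set s := n - (r+1) with hs
      have key : ∀ p ∈ Finset.range (n+1),
          (gp φ m).coeff p * ((gp φ m) ^ r).coeff (n - p)
            = if p < s + 2 then
                (if p = 0 then 0 else
                  (φ (p-1)).eval 1 / ((p-1).factorial : ℚ) *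
                    ((φ (s-(p-1))).eval (r : ℚ) / ((s-(p-1)).factorial : ℚ)))
              else 0 := by
        intro p hp
        rw [Finset.mem_range] at hp
        rw [gp_coeff φ m p (by omega), ih (n-p) (by omega)]
        rcases Nat.eq_zero_or_pos p with h0 | h0
        · subst h0; simp
        · by_cases hps : p < s + 2
          · rw [if_pos hps, if_neg (show ¬ p = 0 by omega),
              if_pos (show r ≤ n - p by omega), (show n - p - r = s - (p-1) by omega),
              if_neg (show ¬ p = 0 by omega)]
          · rw [if_neg hps, if_neg (show ¬ r ≤ n - p by omega), mul_zero]
      rw [Finset.sum_congr rfl key]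
      rw [← Finset.sum_subset (Finset.range_subset_range.2 (show s+2 ≤ n+1 by omega))
        (by intro x _ hxs; rw [if_neg (by simpa using hxs)])]
      rw [Finset.sum_range_succ']
      have key2 : ∀ i ∈ Finset.range (s+1),
          (if i+1 < s + 2 then
              (if i+1 = 0 then 0 else
                (φ ((i+1)-1)).eval 1 / (((i+1)-1).factorial : ℚ) *
                  ((φ (s-((i+1)-1))).eval (r : ℚ) / ((s-((i+1)-1)).factorial : ℚ)))
            else 0)
          = (s.choose i : ℚ) * (φ i).eval 1 * (φ (s-i)).eval (r : ℚ) / (s.factorial : ℚ) := by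
        intro i hi
        rw [Finset.mem_range] at hi
        rw [if_pos (by omega), if_neg (by omega), Nat.add_sub_cancel,
          Nat.cast_choose ℚ (show i ≤ s by omega)]
        have hf1 : ((i.factorial : ℚ)) ≠ 0 := Nat.cast_ne_zero.2 (Nat.factorial_ne_zero _)
        have hf2 : (((s-i).factorial : ℚ)) ≠ 0 := Nat.cast_ne_zero.2 (Nat.factorial_ne_zero _)
        have hf3 : ((s.factorial : ℚ)) ≠ 0 := Nat.cast_ne_zero.2 (Nat.factorial_ne_zero _)
        field_simp
      rw [Finset.sum_congr rfl key2, if_pos (show (0:ℕ) < s+2 by omega), if_pos rfl, add_zero,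
        ← Finset.sum_div]
      have hb := hbin s 1 (r : ℚ)
      push_cast
      rw [show ((r:ℚ) + 1) = 1 + r by ring, hb]
    · rw [if_neg h]
      apply Finset.sum_eq_zero
      intro p hp
      rw [Finset.mem_range] at hp
      rw [gp_coeff φ m p (by omega), ih (n-p) (by omega)]
      rcases Nat.eq_zero_or_pos p with h0 | h0
      · subst h0; simp
      · rw [if_neg (show ¬ r ≤ n - p by omega), mul_zero]

lemma gp_pow_coeff_m (φ : ℕ → Polynomial ℚ) (m r : ℕ) :
    ((gp φ m) ^ r).coeff m
      = ∑ k ∈ (Finset.piAntidiag (Finset.range m) r).filter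
          (fun k => (∑ i ∈ Finset.range m, (i+1) * k i) = m),
          (Nat.multinomial (Finset.range m) k : ℚ)
            * ∏ i ∈ Finset.range m, ((φ i).eval 1 / (i.factorial : ℚ)) ^ k i := by
  rw [gp, Finset.sum_pow_eq_sum_piAntidiag, Polynomial.finset_sum_coeff, Finset.sum_filter]
  refine Finset.sum_congr rfl fun k hk => ?_
  simp_rw [Polynomial.monomial_pow, prod_monomial_aux, ← Polynomial.C_eq_natCast,
    Polynomial.coeff_C_mul, Polynomial.coeff_monomial]
  by_cases h : (∑ i ∈ Finset.range m, (i+1) * k i) = m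
  · rw [if_pos h, if_pos h]
  · rw [if_neg h, if_neg h, mul_zero]

lemma partialBell_eq_coeff (φ : ℕ → Polynomial ℚ) (m r : ℕ) :
    partialBell (fun k => (k : ℚ) * (φ (k-1)).eval 1) m r
      = (m.factorial : ℚ) / (r.factorial : ℚ) * ((gp φ m) ^ r).coeff m := by
  rw [gp_pow_coeff_m, Finset.mul_sum, partialBell]
  refine Finset.sum_nbij' (i := fun c => fun j => if h : j < m then c ⟨j, h⟩ else 0)
    (j := fun k => fun j : Fin m => k j.1) ?_ ?_ ?_ ?_ ?_
  · -- maps into filter piAntidiag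
    intro c hc
    rw [bellIndex, Finset.mem_filter] at hc
    obtain ⟨-, hsum, hwt⟩ := hc
    have e1 : ∀ f : ℕ → ℕ, (∑ i ∈ Finset.range m, f i)
        = ∑ i : Fin m, f i.1 := fun f => (Fin.sum_univ_eq_sum_range f m).symm
    rw [Finset.mem_filter, Finset.mem_piAntidiag]
    refine ⟨⟨?_, ?_⟩, ?_⟩
    · rw [e1, ← hsum]
      exact Finset.sum_congr rfl fun i _ => by simp [i.2]
    · intro i hi
      rw [Finset.mem_range]
      by_contra h
      simp [dif_neg (by omega : ¬ i < m)] at hi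
    · dsimp only
      rw [e1]
      exact (Finset.sum_congr rfl fun i _ => by simp [i.2]).trans hwt
  · -- maps into bellIndex
    intro k hk
    rw [Finset.mem_filter, Finset.mem_piAntidiag] at hk
    obtain ⟨⟨hsum, -⟩, hwt⟩ := hk
    have e1 : ∀ f : ℕ → ℕ, (∑ i : Fin m, f i.1)
        = ∑ i ∈ Finset.range m, f i := fun f => Fin.sum_univ_eq_sum_range f m
    rw [bellIndex, Finset.mem_filter]
    refine ⟨Fintype.mem_piFinset.2 fun i => ?_,
      by dsimp only; exact (Fin.sum_univ_eq_sum_range k m).trans hsum,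
      by dsimp only;
         exact (Fin.sum_univ_eq_sum_range (fun j => (j+1) * k j) m).trans hwt⟩
    · rw [Finset.mem_range]
      have h1 : (i.1+1) * k i.1 ≤ ∑ j ∈ Finset.range m, (j+1) * k j :=
        Finset.single_le_sum (f := fun j => (j+1) * k j) (fun j _ => Nat.zero_le _)
          (Finset.mem_range.2 i.2)
      have h2 : k i.1 ≤ (i.1+1) * k i.1 := Nat.le_mul_of_pos_left _ (Nat.succ_pos _)
      omega
  · intro c hc
    funext i
    dsimp only
    rw [dif_pos i.2]
  · intro k hk
    rw [Finset.mem_filter, Finset.mem_piAntidiag] at hk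
    obtain ⟨⟨-, hsupp⟩, -⟩ := hk
    funext j
    dsimp only
    by_cases h : j < m
    · rw [dif_pos h]
    · rw [dif_neg h]
      by_contra hne
      exact h (Finset.mem_range.1 (hsupp j fun e => hne e.symm))
  · -- values agree
    intro c hc
    rw [bellIndex, Finset.mem_filter] at hc
    obtain ⟨-, hsum, -⟩ := hc
    set G : ℕ → ℕ := fun j => if h : j < m then c ⟨j, h⟩ else 0 with hG
    have hGsum : ∑ i ∈ Finset.range m, G i = r := by
      rw [← Fin.sum_univ_eq_sum_range G m, ← hsum]
      exact Finset.sum_congr rfl fun i _ => by simp [hG, i.2]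
    have hmult : (Nat.multinomial (Finset.range m) G : ℚ)
        = (r.factorial : ℚ) / ∏ i : Fin m, ((c i).factorial : ℚ) := by
      have hspec := Nat.multinomial_spec (Finset.range m) G
      rw [hGsum] at hspec
      have hprod : (∏ i ∈ Finset.range m, ((G i).factorial : ℚ))
          = ∏ i : Fin m, ((c i).factorial : ℚ) := by
        rw [← Fin.prod_univ_eq_prod_range (fun i => ((G i).factorial : ℚ)) m]
        exact Finset.prod_congr rfl fun i _ => by simp [hG, i.2]
      rw [eq_div_iff (by
        rw [← hprod]
        exact Finset.prod_ne_zero_iff.2 fun i _ => Nat.cast_ne_zero.2 (Nat.factorial_ne_zero _))]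
      rw [← hprod, ← Nat.cast_prod, ← Nat.cast_mul, mul_comm, hspec]
    have hprod2 : (∏ i ∈ Finset.range m, ((φ i).eval 1 / (i.factorial : ℚ)) ^ G i)
        = ∏ i : Fin m, (((i.1+1 : ℕ) : ℚ) * (φ i.1).eval 1 / ((i.1+1).factorial : ℚ)) ^ c i := by
      rw [← Fin.prod_univ_eq_prod_range (fun i => ((φ i).eval 1 / (i.factorial : ℚ)) ^ G i) m]
      refine Finset.prod_congr rfl fun i _ => ?_
      have hbase : ((φ i.1).eval 1 / (i.1.factorial : ℚ))
          = ((i.1+1 : ℕ) : ℚ) * (φ i.1).eval 1 / ((i.1+1).factorial : ℚ) := by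
        have hf : ((i.1.factorial : ℚ)) ≠ 0 := Nat.cast_ne_zero.2 (Nat.factorial_ne_zero _)
        have hs : ((i.1 : ℚ) + 1) ≠ 0 := by positivity
        rw [Nat.factorial_succ]
        push_cast
        field_simp
      rw [← hbase]
      simp [hG, i.2]
    rw [hmult, hprod2]
    have hne : ((r.factorial : ℚ)) ≠ 0 := Nat.cast_ne_zero.2 (Nat.factorial_ne_zero _)
    have hne2 : (∏ i : Fin m, ((c i).factorial : ℚ)) ≠ 0 :=
      Finset.prod_ne_zero_iff.2 fun i _ => Nat.cast_ne_zero.2 (Nat.factorial_ne_zero _)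
    field_simp
    ring
    simp only [Nat.add_sub_cancel_left]

/-- For a binomial sequence of polynomials `{φ_n}` and `m ≥ r ≥ 1`,
`B_{m,r}(1, 2φ₁(1), 3φ₂(1), …) = C(m,r) · φ_{m-r}(r)`,
the `k`-th Bell argument being `k·φ_{k-1}(1)`. -/
theorem partialBell_binomial_sequence (φ : ℕ → Polynomial ℚ) (h0 : φ 0 = 1)
    (hbin : ∀ (n : ℕ) (x y : ℚ), (φ n).eval (x + y)
      = ∑ i ∈ Finset.range (n+1), (n.choose i : ℚ) * (φ i).eval x * (φ (n-i)).eval y)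
    (m r : ℕ) (h1 : 1 ≤ r) (h2 : r ≤ m) :
    partialBell (fun k => (k : ℚ) * (φ (k-1)).eval 1) m r
      = (m.choose r : ℚ) * (φ (m-r)).eval (r : ℚ) := by
  rw [partialBell_eq_coeff φ m r,
    gp_pow_coeff φ hbin m r h1 m le_rfl, if_pos h2, Nat.cast_choose ℚ h2]
  have hf1 : ((r.factorial : ℚ)) ≠ 0 := Nat.cast_ne_zero.2 (Nat.factorial_ne_zero _)
  have hf2 : (((m-r).factorial : ℚ)) ≠ 0 := Nat.cast_ne_zero.2 (Nat.factorial_ne_zero _)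
  field_simp
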